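/- Fix R > 0, a natural number r ≥ 1, complex numbers t₀, t₁, …, t_r with t₀ real, and a sequence (s_k)_{k≥1} of complex numbers such that for some ρ > R the series Σ_{k≥1} ‖s_k‖·ρ^k converges. For θ ∈ ℝ set ζ(θ) = R·e^{iθ}, g(θ) = −Σ_{k=1}^{r} (t_k/k)·ζ(θ)^{−k} + t₀·(log R + iθ) + Σ_{k=1}^{∞} s_k·ζ(θ)^{k}, and f(θ) = Σ_{k=0}^{r} t_k·ζ(θ)^{−k−1} + Σ_{k=1}^{∞} k·s_k·ζ(θ)^{k−1}. Then (1/(2πi)) ∫_{−π}^{π} conj(g(θ)) · f(θ) · (i R e^{iθ}) dθ = −Σ_{k=1}^{r} (‖t_k‖²/k)·R^{−2k} + Σ_{k=1}^{∞} k·‖s_k‖²·R^{2k} + 2·t₀²·log R − t₀·g(π) + iπ·t₀². -/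

import Mathlib

open Real Complex

open Real Complex MeasureTheory intervalIntegral

noncomputable section
namespace SmallCircleAux

def E (m : ℤ) (θ : ℝ) : ℂ := Complex.exp (Complex.I * m * θ)

lemma E_cont (m : ℤ) : Continuous (E m) := by
  unfold E; fun_prop

lemma E_norm (m : ℤ) (θ : ℝ) : ‖E m θ‖ = 1 := by
  unfold E
  rw [Complex.norm_exp]
  norm_num [Complex.mul_re, Complex.mul_im]

lemma E_mul (m n : ℤ) (θ : ℝ) : E m θ * E n θ = E (m + n) θ := by
  unfold E
  rw [← Complex.exp_add]
  push_cast; ring_nf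

lemma E_zero (θ : ℝ) : E 0 θ = 1 := by
  unfold E; norm_num

lemma neg_one_zpow_eq (m : ℤ) : ((-1 : ℂ)) ^ (-m) = (-1 : ℂ) ^ m := by
  rw [zpow_neg, ← inv_zpow, inv_neg, inv_one]

lemma E_pi (m : ℤ) : E m π = (-1 : ℂ) ^ m := by
  unfold E
  rw [show Complex.I * m * π = m * (π * Complex.I) by ring, Complex.exp_int_mul,
    Complex.exp_pi_mul_I]

lemma exp_neg_pi (m : ℤ) : Complex.exp (Complex.I * m * (-(π : ℂ))) = (-1 : ℂ) ^ m := by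
  rw [show Complex.I * m * (-(π : ℂ)) = ((-m : ℤ) : ℂ) * (π * Complex.I) by push_cast; ring,
    Complex.exp_int_mul, Complex.exp_pi_mul_I, neg_one_zpow_eq]

lemma integral_E (m : ℤ) :
    ∫ θ in (-π)..π, E m θ = if m = 0 then (2 * π : ℂ) else 0 := by
  rcases eq_or_ne m 0 with h | h
  · subst h
    simp only [if_true]
    unfold E
    norm_num
    ring
  · rw [if_neg h]
    have hc : (Complex.I * m) ≠ 0 := by
      simp [Complex.I_ne_zero, Complex.ext_iff]
      exact_mod_cast h
    have : ∀ θ : ℝ, E m θ = Complex.exp (Complex.I * m * θ) := fun _ => rfl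
    simp only [this]
    rw [integral_exp_mul_complex hc]
    have h1 : Complex.exp (Complex.I * m * π) = (-1 : ℂ) ^ m := E_pi m
    have h2 : Complex.exp (Complex.I * m * ((-π : ℝ) : ℂ)) = (-1 : ℂ) ^ m := by
      rw [show (((-π : ℝ)) : ℂ) = -(π : ℂ) by push_cast; ring]; exact exp_neg_pi m
    rw [h1, h2]
    simp

lemma integral_theta_E (m : ℤ) (hm : m ≠ 0) :
    ∫ θ in (-π)..π, (θ : ℂ) * E m θ = 2 * π * (-1 : ℂ) ^ m / (Complex.I * m) := by
  have hc : (Complex.I * m) ≠ 0 := by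
    simp [Complex.I_ne_zero, Complex.ext_iff]
    exact_mod_cast hm
  have hd : ∀ θ : ℝ, HasDerivAt (fun x : ℝ => ((x : ℂ) / (Complex.I * m)
      - 1 / (Complex.I * m) ^ 2) * Complex.exp (Complex.I * m * x))
      ((θ : ℂ) * E m θ) θ := by
    intro θ
    have h1 : HasDerivAt (fun x : ℝ => ((x : ℂ) / (Complex.I * m)
        - 1 / (Complex.I * m) ^ 2)) (1 / (Complex.I * m)) θ := by
      have h := ((hasDerivAt_id θ).ofReal_comp.div_const (Complex.I * m)).sub_const
        (1 / (Complex.I * m) ^ 2)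
      exact h.congr_deriv (by simp)
    have h2 : HasDerivAt (fun x : ℝ => Complex.exp (Complex.I * m * x))
        (Complex.I * m * Complex.exp (Complex.I * m * θ)) θ := by
      have hlin : HasDerivAt (fun x : ℝ => Complex.I * m * (x : ℂ)) (Complex.I * m) θ := by
        simpa using (Complex.ofRealCLM.hasDerivAt (x := θ)).const_mul (Complex.I * m)
      simpa [mul_comm] using hlin.cexp
    have := h1.mul h2
    refine this.congr_deriv ?_
    unfold E
    field_simp
    ring
  rw [integral_eq_sub_of_hasDerivAt (fun θ _ => hd θ) (by
    apply Continuous.intervalIntegrable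
    exact (Complex.continuous_ofReal).mul (E_cont m))]
  have h1 : Complex.exp (Complex.I * m * (π : ℂ)) = (-1 : ℂ) ^ m := E_pi m
  have h2 : Complex.exp (Complex.I * m * ((-π : ℝ) : ℂ)) = (-1 : ℂ) ^ m := by
    rw [show (((-π : ℝ)) : ℂ) = -(π : ℂ) by push_cast; ring]; exact exp_neg_pi m
  rw [h1, h2]
  push_cast
  field_simp
  ring

lemma integral_theta : ∫ θ in (-π)..π, (θ : ℂ) = 0 := by
  rw [intervalIntegral.integral_ofReal]
  norm_num

lemma swap_tsum (F : ℕ → ℝ → ℂ) (hF : ∀ n, Continuous (F n)) (M : ℕ → ℝ)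
    (hM : Summable M) (hb : ∀ n, ∀ θ ∈ Set.Ioc (-π : ℝ) π, ‖F n θ‖ ≤ M n) :
    ∫ θ in (-π)..π, (∑' n, F n θ) = ∑' n, ∫ θ in (-π)..π, F n θ := by
  have hle : (-π : ℝ) ≤ π := by linarith [Real.pi_pos]
  have hint : ∀ n, IntegrableOn (F n) (Set.Ioc (-π) π) volume :=
    fun n => ((hF n).integrableOn_Icc).mono_set Set.Ioc_subset_Icc_self
  simp only [intervalIntegral.integral_of_le hle]
  rw [← MeasureTheory.integral_tsum_of_summable_integral_norm hint]
  apply Summable.of_nonneg_of_le (fun n => integral_nonneg (fun a => norm_nonneg _))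
    (fun n => ?_) (hM.mul_left ((volume (Set.Ioc (-π : ℝ) π)).toReal))
  calc ∫ a in Set.Ioc (-π) π, ‖F n a‖
      ≤ ∫ _ in Set.Ioc (-π : ℝ) π, M n := by
        apply setIntegral_mono_on (hint n).norm
          (integrableOn_const measure_Ioc_lt_top.ne) measurableSet_Ioc
        exact fun x hx => hb n x hx
    _ = (volume (Set.Ioc (-π : ℝ) π)).toReal * M n := by
        rw [setIntegral_const, smul_eq_mul]; rfl

lemma cont_tsumE (b : ℕ → ℂ) (m : ℕ → ℤ) (M : ℕ → ℝ) (hM : Summable M)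
    (hbM : ∀ k, ‖b k‖ ≤ M k) :
    Continuous (fun θ => ∑' k, b k * E (m k) θ) :=
  continuous_tsum (fun k => continuous_const.mul (E_cont (m k))) hM
    (fun k θ => by rw [norm_mul, E_norm, mul_one]; exact hbM k)

lemma norm_tsumE_le (a : ℕ → ℂ) (m : ℕ → ℤ) (Ma : ℕ → ℝ) (hMa : Summable Ma)
    (haM : ∀ j, ‖a j‖ ≤ Ma j) (θ : ℝ) :
    ‖∑' j, a j * E (m j) θ‖ ≤ ∑' j, Ma j :=
  tsum_of_norm_bounded hMa.hasSum
    (fun j => by rw [norm_mul, E_norm, mul_one]; exact haM j)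

lemma Hsingle (a b : ℂ) (m₁ m₂ : ℤ) :
    ∫ θ in (-π)..π, (a * E m₁ θ) * (b * E m₂ θ)
      = a * b * (if m₁ + m₂ = 0 then (2 * π : ℂ) else 0) := by
  have h : ∀ θ : ℝ, (a * E m₁ θ) * (b * E m₂ θ) = (a * b) * E (m₁ + m₂) θ := by
    intro θ; rw [mul_mul_mul_comm, E_mul]
  rw [integral_congr (fun θ _ => h θ), intervalIntegral.integral_const_mul, integral_E]

lemma Hswap (w : ℝ → ℂ) (hw : Continuous w) (Cw : ℝ)
    (hwb : ∀ θ ∈ Set.Ioc (-π : ℝ) π, ‖w θ‖ ≤ Cw)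
    (b : ℕ → ℂ) (m : ℕ → ℤ) (M : ℕ → ℝ) (hM : Summable M) (hbM : ∀ k, ‖b k‖ ≤ M k) :
    ∫ θ in (-π)..π, w θ * (∑' k, b k * E (m k) θ)
      = ∑' k, ∫ θ in (-π)..π, w θ * (b k * E (m k) θ) := by
  have hπ := Real.pi_pos
  have hCw : 0 ≤ Cw := le_trans (norm_nonneg _) (hwb π ⟨by linarith, le_refl _⟩)
  have h1 : ∀ θ : ℝ, w θ * (∑' k, b k * E (m k) θ) = ∑' k, w θ * (b k * E (m k) θ) :=
    fun θ => (tsum_mul_left).symm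
  rw [integral_congr (fun θ _ => h1 θ)]
  exact swap_tsum _ (fun k => hw.mul (continuous_const.mul (E_cont _))) (fun k => Cw * M k)
    (hM.mul_left Cw)
    (fun k θ hθ => by
      rw [norm_mul, norm_mul, E_norm, mul_one]
      exact mul_le_mul (hwb θ hθ) (hbM k) (norm_nonneg _) hCw)

lemma H1 (N₁ N₂ : Finset ℕ) (a b : ℕ → ℂ) (m₁ m₂ : ℕ → ℤ) :
    ∫ θ in (-π)..π, (∑ j ∈ N₁, a j * E (m₁ j) θ) * (∑ k ∈ N₂, b k * E (m₂ k) θ)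
      = ∑ j ∈ N₁, ∑ k ∈ N₂, a j * b k * (if m₁ j + m₂ k = 0 then (2 * π : ℂ) else 0) := by
  have h : ∀ θ : ℝ, (∑ j ∈ N₁, a j * E (m₁ j) θ) * (∑ k ∈ N₂, b k * E (m₂ k) θ)
      = ∑ j ∈ N₁, ∑ k ∈ N₂, (a j * E (m₁ j) θ) * (b k * E (m₂ k) θ) :=
    fun θ => Finset.sum_mul_sum _ _ _ _
  rw [integral_congr (fun θ _ => h θ)]
  rw [intervalIntegral.integral_finset_sum (f := fun j θ => ∑ k ∈ N₂, a j * E (m₁ j) θ * (b k * E (m₂ k) θ)) (fun j _ => (Continuous.intervalIntegrable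
    (continuous_finset_sum _ (fun k _ => (continuous_const.mul (E_cont _)).mul (continuous_const.mul (E_cont _))))
    _ _))]
  refine Finset.sum_congr rfl (fun j _ => ?_)
  rw [intervalIntegral.integral_finset_sum (f := fun k θ => a j * E (m₁ j) θ * (b k * E (m₂ k) θ)) (fun k _ =>
    (((continuous_const.mul (E_cont _)).mul (continuous_const.mul (E_cont _))).intervalIntegrable _ _))]
  exact Finset.sum_congr rfl (fun k _ => Hsingle _ _ _ _)

lemma H2 (N : Finset ℕ) (a : ℕ → ℂ) (m₁ : ℕ → ℤ) (b : ℕ → ℂ) (m₂ : ℕ → ℤ)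
    (M : ℕ → ℝ) (hM : Summable M) (hbM : ∀ k, ‖b k‖ ≤ M k) :
    ∫ θ in (-π)..π, (∑ j ∈ N, a j * E (m₁ j) θ) * (∑' k, b k * E (m₂ k) θ)
      = ∑ j ∈ N, ∑' k, a j * b k * (if m₁ j + m₂ k = 0 then (2 * π : ℂ) else 0) := by
  have hQ := cont_tsumE b m₂ M hM hbM
  have h : ∀ θ : ℝ, (∑ j ∈ N, a j * E (m₁ j) θ) * (∑' k, b k * E (m₂ k) θ)
      = ∑ j ∈ N, (a j * E (m₁ j) θ) * (∑' k, b k * E (m₂ k) θ) :=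
    fun θ => Finset.sum_mul _ _ _
  rw [integral_congr (fun θ _ => h θ)]
  rw [intervalIntegral.integral_finset_sum (f := fun j θ => a j * E (m₁ j) θ * ∑' k, b k * E (m₂ k) θ) (fun j _ =>
    (((continuous_const.mul (E_cont _)).mul hQ).intervalIntegrable _ _))]
  refine Finset.sum_congr rfl (fun j _ => ?_)
  rw [Hswap (fun θ => a j * E (m₁ j) θ) (continuous_const.mul (E_cont _)) (‖a j‖)
      (fun θ _ => by rw [norm_mul, E_norm, mul_one]) b m₂ M hM hbM]
  exact tsum_congr (fun k => Hsingle _ _ _ _)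

lemma H5 (a : ℕ → ℂ) (m₁ : ℕ → ℤ) (b : ℕ → ℂ) (m₂ : ℕ → ℤ) (Ma Mb : ℕ → ℝ)
    (hMa : Summable Ma) (haM : ∀ j, ‖a j‖ ≤ Ma j)
    (hMb : Summable Mb) (hbM : ∀ k, ‖b k‖ ≤ Mb k) :
    ∫ θ in (-π)..π, (∑' j, a j * E (m₁ j) θ) * (∑' k, b k * E (m₂ k) θ)
      = ∑' k, ∑' j, a j * b k * (if m₁ j + m₂ k = 0 then (2 * π : ℂ) else 0) := by
  have hP := cont_tsumE a m₁ Ma hMa haM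
  rw [Hswap _ hP (∑' j, Ma j) (fun θ _ => norm_tsumE_le a m₁ Ma hMa haM θ) b m₂ Mb hMb hbM]
  refine tsum_congr (fun k => ?_)
  have h2 : ∀ θ : ℝ, (∑' j, a j * E (m₁ j) θ) * (b k * E (m₂ k) θ)
      = (b k * E (m₂ k) θ) * (∑' j, a j * E (m₁ j) θ) := fun θ => mul_comm _ _
  rw [integral_congr (fun θ _ => h2 θ)]
  rw [Hswap (fun θ => b k * E (m₂ k) θ) (continuous_const.mul (E_cont _)) (‖b k‖)
      (fun θ _ => by rw [norm_mul, E_norm, mul_one]) a m₁ Ma hMa haM]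
  refine tsum_congr (fun j => ?_)
  rw [Hsingle _ _ _ _, add_comm (m₂ k) (m₁ j)]
  ring

lemma H3 (c₁ c₂ : ℂ) (m : ℤ) :
    ∫ θ in (-π)..π, (c₁ + c₂ * (θ : ℂ)) * E m θ
      = if m = 0 then 2 * π * c₁
        else c₂ * (2 * π * (-1 : ℂ) ^ m / (Complex.I * m)) := by
  have h : ∀ θ : ℝ, (c₁ + c₂ * (θ : ℂ)) * E m θ
      = c₁ * E m θ + c₂ * ((θ : ℂ) * E m θ) := by intro θ; ring
  rw [integral_congr (fun θ _ => h θ)]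
  rw [integral_add (f := fun θ => c₁ * E m θ) (g := fun θ => c₂ * ((θ : ℂ) * E m θ)) ((continuous_const.mul (E_cont m)).intervalIntegrable _ _)
    ((continuous_const.mul (Complex.continuous_ofReal.mul (E_cont m))).intervalIntegrable _ _)]
  rw [intervalIntegral.integral_const_mul, intervalIntegral.integral_const_mul, integral_E]
  rcases eq_or_ne m 0 with hm | hm
  · subst hm
    simp only [if_true]
    have h0 : ∀ θ : ℝ, (θ : ℂ) * E 0 θ = (θ : ℂ) := by
      intro θ; rw [E_zero, mul_one]
    rw [integral_congr (fun θ _ => h0 θ), integral_theta]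
    ring
  · rw [if_neg hm, if_neg hm, integral_theta_E m hm]
    ring

lemma H4 (c₁ c₂ : ℂ) (b : ℕ → ℂ) (m : ℕ → ℤ) (M : ℕ → ℝ) (hM : Summable M)
    (hbM : ∀ k, ‖b k‖ ≤ M k) :
    ∫ θ in (-π)..π, (c₁ + c₂ * (θ : ℂ)) * (∑' k, b k * E (m k) θ)
      = ∑' k, b k * (if m k = 0 then 2 * π * c₁
          else c₂ * (2 * π * (-1 : ℂ) ^ (m k) / (Complex.I * (m k)))) := by
  have hπ := Real.pi_pos
  have hwc : Continuous (fun θ : ℝ => c₁ + c₂ * (θ : ℂ)) :=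
    continuous_const.add (continuous_const.mul Complex.continuous_ofReal)
  have hwb : ∀ θ ∈ Set.Ioc (-π : ℝ) π, ‖c₁ + c₂ * (θ : ℂ)‖ ≤ ‖c₁‖ + ‖c₂‖ * π := by
    intro θ hθ
    calc ‖c₁ + c₂ * (θ : ℂ)‖ ≤ ‖c₁‖ + ‖c₂ * (θ : ℂ)‖ := norm_add_le _ _
      _ = ‖c₁‖ + ‖c₂‖ * |θ| := by
          rw [norm_mul, Complex.norm_real, Real.norm_eq_abs]
      _ ≤ ‖c₁‖ + ‖c₂‖ * π := by
          have : |θ| ≤ π := abs_le.2 ⟨le_of_lt hθ.1, hθ.2⟩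
          nlinarith [norm_nonneg c₂]
  rw [Hswap _ hwc (‖c₁‖ + ‖c₂‖ * π) hwb b m M hM hbM]
  refine tsum_congr (fun k => ?_)
  have h : ∀ θ : ℝ, (c₁ + c₂ * (θ : ℂ)) * (b k * E (m k) θ)
      = b k * ((c₁ + c₂ * (θ : ℂ)) * E (m k) θ) := by intro θ; ring
  rw [integral_congr (fun θ _ => h θ), intervalIntegral.integral_const_mul, H3]

lemma H3sum (c₁ c₂ : ℂ) (N : Finset ℕ) (b : ℕ → ℂ) (m : ℕ → ℤ) :
    ∫ θ in (-π)..π, (c₁ + c₂ * (θ : ℂ)) * (∑ k ∈ N, b k * E (m k) θ)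
      = ∑ k ∈ N, b k * (if m k = 0 then 2 * π * c₁
          else c₂ * (2 * π * (-1 : ℂ) ^ (m k) / (Complex.I * (m k)))) := by
  have h : ∀ θ : ℝ, (c₁ + c₂ * (θ : ℂ)) * (∑ k ∈ N, b k * E (m k) θ)
      = ∑ k ∈ N, b k * ((c₁ + c₂ * (θ : ℂ)) * E (m k) θ) := by
    intro θ; rw [Finset.mul_sum]; exact Finset.sum_congr rfl (fun k _ => by ring)
  rw [integral_congr (fun θ _ => h θ)]
  rw [intervalIntegral.integral_finset_sum (f := fun k θ => b k * ((c₁ + c₂ * (θ : ℂ)) * E (m k) θ)) (fun k _ => Continuous.intervalIntegrable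
    (continuous_const.mul ((continuous_const.add
      (continuous_const.mul Complex.continuous_ofReal)).mul (E_cont _))) _ _)]
  exact Finset.sum_congr rfl (fun k _ => by
    rw [intervalIntegral.integral_const_mul, H3])

end SmallCircleAux



open MeasureTheory intervalIntegral SmallCircleAux in
/-- Integral over a small circle of radius R around a puncture: with local times t_k,
conjugate times s_k, local antiderivative g and 1-form f·(iRe^{iθ})dθ of y dx, one has
(1/2πi)∮ conj(g)·y dx = −Σ_{k=1}^r ‖t_k‖²R^{−2k}/k + Σ_{k≥1} k‖s_k‖²R^{2k}
+ 2t₀² log R − t₀ g(π) + iπt₀². -/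
theorem integral_over_small_circle
    (R : ℝ) (hR : 0 < R) (r : ℕ) (hr : 1 ≤ r)
    (t : ℕ → ℂ) (ht0 : (t 0).im = 0)
    (s : ℕ → ℂ)
    (hsum : ∃ ρ : ℝ, R < ρ ∧ Summable (fun k : ℕ => ‖s (k + 1)‖ * ρ ^ (k + 1)))
    (ζ : ℝ → ℂ) (hζ : ∀ θ : ℝ, ζ θ = (R : ℂ) * Complex.exp (Complex.I * θ))
    (g : ℝ → ℂ)
    (hg : ∀ θ : ℝ, g θ =
      -(∑ k ∈ Finset.Icc 1 r, (t k / (k : ℂ)) * (ζ θ) ^ (-(k : ℤ)))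
      + t 0 * ((Real.log R : ℂ) + Complex.I * θ)
      + ∑' k : ℕ, s (k + 1) * (ζ θ) ^ (k + 1))
    (f : ℝ → ℂ)
    (hf : ∀ θ : ℝ, f θ =
      ∑ k ∈ Finset.range (r + 1), t k * (ζ θ) ^ (-(k : ℤ) - 1)
      + ∑' k : ℕ, ((k : ℂ) + 1) * s (k + 1) * (ζ θ) ^ k) :
    (1 / (2 * (π : ℂ) * Complex.I)) *
        ∫ θ in (-π)..π,
          (starRingEnd ℂ) (g θ) * f θ * (Complex.I * (R : ℂ) * Complex.exp (Complex.I * θ)) =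
      -(∑ k ∈ Finset.Icc 1 r, ((‖t k‖ ^ 2 / (k : ℝ) : ℝ) : ℂ) * (R : ℂ) ^ (-(2 * k : ℤ)))
      + (∑' k : ℕ, ((k : ℂ) + 1) * ((‖s (k + 1)‖ ^ 2 : ℝ) : ℂ) * (R : ℂ) ^ (2 * (k + 1)))
      + 2 * (t 0) ^ 2 * (Real.log R : ℂ)
      - t 0 * g π
      + (π : ℂ) * Complex.I * (t 0) ^ 2 := by
  obtain ⟨ρ, hρR, hs⟩ := hsum
  have hπ := Real.pi_pos
  have hπC : ((π : ℝ) : ℂ) ≠ 0 := Complex.ofReal_ne_zero.2 Real.pi_ne_zero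
  have hRC : (R : ℂ) ≠ 0 := Complex.ofReal_ne_zero.2 hR.ne'
  have hρ0 : 0 < ρ := lt_trans hR hρR
  have ht0' : (starRingEnd ℂ) (t 0) = t 0 := Complex.conj_eq_iff_im.2 ht0
  -- summability facts
  have hsR : Summable (fun k : ℕ => ‖s (k + 1)‖ * R ^ (k + 1)) := by
    refine Summable.of_nonneg_of_le (fun k => by positivity) (fun k => ?_) hs
    exact mul_le_mul_of_nonneg_left (pow_le_pow_left₀ hR.le hρR.le _) (norm_nonneg _)
  have hq1 : R / ρ < 1 := (div_lt_one hρ0).2 hρR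
  have hq0 : 0 ≤ R / ρ := by positivity
  obtain ⟨C, hC⟩ : ∃ C : ℝ, ∀ k : ℕ, ‖s (k + 1)‖ * ρ ^ (k + 1) ≤ C := by
    obtain ⟨C, hC⟩ := (hs.tendsto_atTop_zero.isBoundedUnder_le).bddAbove_range
    exact ⟨C, fun k => hC (Set.mem_range_self k)⟩
  have hgeo : Summable (fun k : ℕ => ((k : ℝ) + 1) * (R / ρ) ^ (k + 1)) := by
    have h := summable_pow_mul_geometric_of_norm_lt_one (R := ℝ) 1
      (r := R / ρ) (by rwa [Real.norm_eq_abs, _root_.abs_of_nonneg hq0])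
    have h2 := (summable_nat_add_iff 1).2 h
    refine h2.congr (fun k => ?_)
    push_cast; ring
  have hdsum : Summable (fun k : ℕ => ((k : ℝ) + 1) * (‖s (k + 1)‖ * R ^ (k + 1))) := by
    refine Summable.of_nonneg_of_le (fun k => by positivity) (fun k => ?_)
      (hgeo.mul_right C)
    have hRk : R ^ (k + 1) = (R / ρ) ^ (k + 1) * ρ ^ (k + 1) := by
      rw [div_pow]; field_simp
    calc ((k : ℝ) + 1) * (‖s (k + 1)‖ * R ^ (k + 1))
        = ((k : ℝ) + 1) * (R / ρ) ^ (k + 1) * (‖s (k + 1)‖ * ρ ^ (k + 1)) := by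
          rw [hRk]; ring
      _ ≤ ((k : ℝ) + 1) * (R / ρ) ^ (k + 1) * C :=
          mul_le_mul_of_nonneg_left (hC k) (by positivity)
  -- ζ facts
  have hζ0 : ∀ θ : ℝ, ζ θ ≠ 0 := fun θ => by
    rw [hζ θ]; exact mul_ne_zero hRC (Complex.exp_ne_zero _)
  have hzpow : ∀ (θ : ℝ) (m : ℤ), (ζ θ) ^ m = (R : ℂ) ^ m * E m θ := by
    intro θ m
    rw [hζ θ, mul_zpow]
    congr 1
    rw [← Complex.exp_int_mul]
    unfold E
    congr 1
    push_cast; ring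
  have hnpow : ∀ (θ : ℝ) (n : ℕ), (ζ θ) ^ n = (R : ℂ) ^ n * E (n : ℤ) θ := by
    intro θ n
    have h := hzpow θ (n : ℤ)
    rwa [zpow_natCast, zpow_natCast] at h
  have hconjE : ∀ (m : ℤ) (θ : ℝ), (starRingEnd ℂ) (E m θ) = E (-m) θ := by
    intro m θ
    unfold E
    rw [← Complex.exp_conj, map_mul, map_mul, Complex.conj_I, Complex.conj_ofReal, map_intCast]
    congr 1; push_cast; ring
  have hζpi : ζ π = -(R : ℂ) := by
    rw [hζ π, show Complex.I * (π : ℂ) = (π : ℂ) * Complex.I by ring, Complex.exp_pi_mul_I]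
    ring
  -- coefficients
  set A : ℕ → ℂ := fun j => -((starRingEnd ℂ) (t j) / j) * (R : ℂ) ^ (-(j : ℤ)) with hA
  set bb : ℕ → ℂ := fun k => t k * (R : ℂ) ^ (-(k : ℤ)) with hbb
  set cc : ℕ → ℂ := fun j => (starRingEnd ℂ) (s (j + 1)) * (R : ℂ) ^ (j + 1) with hcc
  set dd : ℕ → ℂ := fun k => ((k : ℂ) + 1) * s (k + 1) * (R : ℂ) ^ (k + 1) with hdd
  set P1 : ℝ → ℂ := fun θ => ∑ j ∈ Finset.Icc 1 r, A j * E (j : ℤ) θ with hP1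
  set P3 : ℝ → ℂ := fun θ => ∑' j : ℕ, cc j * E (-((j + 1 : ℕ) : ℤ)) θ with hP3
  set Q1 : ℝ → ℂ := fun θ => ∑ k ∈ Finset.range (r + 1), bb k * E (-(k : ℤ)) θ with hQ1
  set Q2 : ℝ → ℂ := fun θ => ∑' k : ℕ, dd k * E (((k + 1 : ℕ) : ℤ)) θ with hQ2
  have hccM : ∀ j, ‖cc j‖ ≤ ‖s (j + 1)‖ * R ^ (j + 1) := by
    intro j
    rw [hcc]
    simp only [norm_mul, norm_pow, RCLike.norm_conj, Complex.norm_real, Real.norm_eq_abs,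
      abs_of_pos hR, le_refl]
  have hddM : ∀ k, ‖dd k‖ ≤ ((k : ℝ) + 1) * (‖s (k + 1)‖ * R ^ (k + 1)) := by
    intro k
    have hdk : dd k = ((k + 1 : ℕ) : ℂ) * s (k + 1) * (R : ℂ) ^ (k + 1) := by
      rw [hdd]; push_cast; ring
    rw [hdk, norm_mul, norm_mul, Complex.norm_natCast, norm_pow, Complex.norm_real,
      Real.norm_eq_abs, abs_of_pos hR]
    push_cast
    exact le_of_eq (by ring)
  -- pointwise decomposition of conj ∘ g
  have hgc : ∀ θ : ℝ, (starRingEnd ℂ) (g θ)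
      = P1 θ + t 0 * ((Real.log R : ℂ) - Complex.I * θ) + P3 θ := by
    intro θ
    rw [hg θ, map_add, map_add, map_neg, map_sum]
    congr 1
    · congr 1
      · rw [hP1, ← Finset.sum_neg_distrib]
        refine Finset.sum_congr rfl (fun j hj => ?_)
        rw [map_mul, map_div₀, map_natCast, hzpow θ, map_mul, hconjE, neg_neg,
          map_zpow₀, Complex.conj_ofReal]
        simp only [hA]
        ring
      · rw [map_mul, ht0', map_add, map_mul, Complex.conj_I, Complex.conj_ofReal,
          Complex.conj_ofReal]
        ring
    · have hst : (starRingEnd ℂ) (∑' k : ℕ, s (k + 1) * (ζ θ) ^ (k + 1))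
          = ∑' k : ℕ, (starRingEnd ℂ) (s (k + 1) * (ζ θ) ^ (k + 1)) := tsum_star
      rw [hst, hP3]
      refine tsum_congr (fun k => ?_)
      rw [map_mul, hnpow, map_mul, hconjE, map_pow, Complex.conj_ofReal]
      simp only [hcc]
      ring
  -- pointwise decomposition of f · iζ
  have huf : ∀ θ : ℝ, f θ * (Complex.I * (R : ℂ) * Complex.exp (Complex.I * θ))
      = Complex.I * (Q1 θ + Q2 θ) := by
    intro θ
    have hIζ : Complex.I * (R : ℂ) * Complex.exp (Complex.I * θ) = Complex.I * ζ θ := by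
      rw [hζ θ]; ring
    rw [hf θ, hIζ, add_mul, Finset.sum_mul, ← tsum_mul_right, mul_add]
    congr 1
    · rw [hQ1, Finset.mul_sum]
      refine Finset.sum_congr rfl (fun k hk => ?_)
      have hz : (ζ θ) ^ (-(k : ℤ) - 1) * ζ θ = (ζ θ) ^ (-(k : ℤ)) := by
        have h := zpow_add₀ (hζ0 θ) (-(k : ℤ) - 1) 1
        rw [zpow_one] at h
        rw [← h]
        norm_num
      calc t k * (ζ θ) ^ (-(k : ℤ) - 1) * (Complex.I * ζ θ)
          = Complex.I * (t k * ((ζ θ) ^ (-(k : ℤ) - 1) * ζ θ)) := by ring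
        _ = _ := by rw [hz, hzpow]; simp only [hbb]; ring
    · rw [hQ2, ← tsum_mul_left]
      refine tsum_congr (fun k => ?_)
      have hz : (ζ θ) ^ k * ζ θ = (ζ θ) ^ (k + 1) := (pow_succ _ _).symm
      calc ((k : ℂ) + 1) * s (k + 1) * (ζ θ) ^ k * (Complex.I * ζ θ)
          = Complex.I * (((k : ℂ) + 1) * s (k + 1) * ((ζ θ) ^ k * ζ θ)) := by ring
        _ = _ := by rw [hz, hnpow]; simp only [hdd]; push_cast; ring
  -- continuity
  have hP3c : Continuous P3 :=
    cont_tsumE cc (fun j => -((j + 1 : ℕ) : ℤ)) _ hsR hccM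
  have hQ2c : Continuous Q2 :=
    cont_tsumE dd (fun k => ((k + 1 : ℕ) : ℤ)) _ hdsum hddM
  have hP1c : Continuous P1 :=
    continuous_finset_sum _ fun j _ => continuous_const.mul (E_cont _)
  have hQ1c : Continuous Q1 :=
    continuous_finset_sum _ fun k _ => continuous_const.mul (E_cont _)
  have hP2c : Continuous (fun θ : ℝ => t 0 * ((Real.log R : ℂ) - Complex.I * θ)) := by
    fun_prop
  -- split the integral
  have key : ∀ θ : ℝ, (starRingEnd ℂ) (g θ) * f θ
        * (Complex.I * (R : ℂ) * Complex.exp (Complex.I * θ))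
      = Complex.I * (P1 θ * Q1 θ) + Complex.I * (P1 θ * Q2 θ)
        + Complex.I * ((t 0 * ((Real.log R : ℂ) - Complex.I * θ)) * Q1 θ)
        + Complex.I * ((t 0 * ((Real.log R : ℂ) - Complex.I * θ)) * Q2 θ)
        + Complex.I * (P3 θ * Q1 θ) + Complex.I * (P3 θ * Q2 θ) := by
    intro θ
    rw [mul_assoc, hgc θ, huf θ]
    ring
  have i1 : IntervalIntegrable (fun θ => Complex.I * (P1 θ * Q1 θ)) volume (-π) π :=
    (continuous_const.mul (hP1c.mul hQ1c)).intervalIntegrable _ _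
  have i2 : IntervalIntegrable (fun θ => Complex.I * (P1 θ * Q2 θ)) volume (-π) π :=
    (continuous_const.mul (hP1c.mul hQ2c)).intervalIntegrable _ _
  have i3 : IntervalIntegrable
      (fun θ => Complex.I * ((t 0 * ((Real.log R : ℂ) - Complex.I * θ)) * Q1 θ)) volume (-π) π :=
    (continuous_const.mul (hP2c.mul hQ1c)).intervalIntegrable _ _
  have i4 : IntervalIntegrable
      (fun θ => Complex.I * ((t 0 * ((Real.log R : ℂ) - Complex.I * θ)) * Q2 θ)) volume (-π) π :=
    (continuous_const.mul (hP2c.mul hQ2c)).intervalIntegrable _ _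
  have i5 : IntervalIntegrable (fun θ => Complex.I * (P3 θ * Q1 θ)) volume (-π) π :=
    (continuous_const.mul (hP3c.mul hQ1c)).intervalIntegrable _ _
  have i6 : IntervalIntegrable (fun θ => Complex.I * (P3 θ * Q2 θ)) volume (-π) π :=
    (continuous_const.mul (hP3c.mul hQ2c)).intervalIntegrable _ _
  simp only [key]
  rw [intervalIntegral.integral_add ((((i1.add i2).add i3).add i4).add i5) i6,
      intervalIntegral.integral_add (((i1.add i2).add i3).add i4) i5,
      intervalIntegral.integral_add ((i1.add i2).add i3) i4,
      intervalIntegral.integral_add (i1.add i2) i3,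
      intervalIntegral.integral_add i1 i2]
  simp only [intervalIntegral.integral_const_mul]
  -- the six integrals
  have e1 : (∫ θ in (-π)..π, P1 θ * Q1 θ)
      = 2 * (π : ℂ)
        * -(∑ k ∈ Finset.Icc 1 r, ((‖t k‖ ^ 2 / (k : ℝ) : ℝ) : ℂ) * (R : ℂ) ^ (-(2 * k : ℤ))) := by
    simp only [hP1, hQ1]
    rw [H1 (Finset.Icc 1 r) (Finset.range (r + 1)) A bb (fun j => (j : ℤ)) (fun k => -(k : ℤ))]
    have hstep : ∀ j ∈ Finset.Icc 1 r,
        (∑ k ∈ Finset.range (r + 1),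
          A j * bb k * (if (j : ℤ) + -(k : ℤ) = 0 then (2 * (π : ℝ) : ℂ) else 0))
          = 2 * (π : ℂ) * -(((‖t j‖ ^ 2 / (j : ℝ) : ℝ) : ℂ) * (R : ℂ) ^ (-(2 * j : ℤ))) := by
      intro j hj
      obtain ⟨hj1, hj2⟩ := Finset.mem_Icc.1 hj
      rw [Finset.sum_eq_single j]
      · rw [if_pos (by ring)]
        simp only [hA, hbb]
        have hjC : ((j : ℝ) : ℂ) ≠ 0 := by
          simp only [ne_eq, Complex.ofReal_eq_zero, Nat.cast_eq_zero]
          omega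
        have hzz : (R : ℂ) ^ (-(j : ℤ)) * (R : ℂ) ^ (-(j : ℤ)) = (R : ℂ) ^ (-(2 * j : ℤ)) := by
          rw [← zpow_add₀ hRC]; congr 1; ring
        have hcj : (starRingEnd ℂ) (t j) * t j = ((‖t j‖ ^ 2 : ℝ) : ℂ) := by
          rw [RCLike.conj_mul]; norm_cast
        calc -((starRingEnd ℂ) (t j) / (j : ℂ)) * (R : ℂ) ^ (-(j : ℤ))
              * (t j * (R : ℂ) ^ (-(j : ℤ))) * (2 * (π : ℝ) : ℂ)
            = -(((starRingEnd ℂ) (t j) * t j)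
                * ((R : ℂ) ^ (-(j : ℤ)) * (R : ℂ) ^ (-(j : ℤ))) / (j : ℂ)) * (2 * (π : ℂ)) := by
              push_cast; ring
          _ = 2 * (π : ℂ) * -(((‖t j‖ ^ 2 / (j : ℝ) : ℝ) : ℂ) * (R : ℂ) ^ (-(2 * j : ℤ))) := by
              rw [hcj, hzz]; push_cast; ring
      · intro k hk hkj
        rw [if_neg (by omega), mul_zero]
      · intro hj'
        exact absurd (Finset.mem_range.2 (by omega)) hj'
    rw [Finset.sum_congr rfl hstep, ← Finset.mul_sum, ← Finset.sum_neg_distrib]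
  have e2 : (∫ θ in (-π)..π, P1 θ * Q2 θ) = 0 := by
    simp only [hP1, hQ2]
    rw [H2 (Finset.Icc 1 r) A (fun j => (j : ℤ)) dd (fun k => ((k + 1 : ℕ) : ℤ)) _ hdsum hddM]
    refine Finset.sum_eq_zero (fun j hj => ?_)
    exact (tsum_congr fun k => by rw [if_neg (by omega), mul_zero]).trans tsum_zero
  have e5 : (∫ θ in (-π)..π, P3 θ * Q1 θ) = 0 := by
    have hcomm : ∀ θ : ℝ, P3 θ * Q1 θ = Q1 θ * P3 θ := fun θ => mul_comm _ _
    rw [intervalIntegral.integral_congr (fun θ _ => hcomm θ)]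
    simp only [hP3, hQ1]
    rw [H2 (Finset.range (r + 1)) bb (fun k => -(k : ℤ)) cc (fun j => -((j + 1 : ℕ) : ℤ))
      _ hsR hccM]
    refine Finset.sum_eq_zero (fun k hk => ?_)
    exact (tsum_congr fun j => by rw [if_neg (by omega), mul_zero]).trans tsum_zero
  have hrange : Finset.range (r + 1) = insert 0 (Finset.Icc 1 r) := by
    ext x
    simp only [Finset.mem_range, Finset.mem_insert, Finset.mem_Icc]
    omega
  have h0notin : (0 : ℕ) ∉ Finset.Icc 1 r := by simp
  have e3 : (∫ θ in (-π)..π, (t 0 * ((Real.log R : ℂ) - Complex.I * θ)) * Q1 θ)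
      = 2 * (π : ℂ) * ((t 0) ^ 2 * (Real.log R : ℂ)
          + t 0 * ∑ k ∈ Finset.Icc 1 r, (t k / (k : ℂ)) * (ζ π) ^ (-(k : ℤ))) := by
    have hlin : ∀ θ : ℝ, (t 0 * ((Real.log R : ℂ) - Complex.I * θ)) * Q1 θ
        = ((t 0 * (Real.log R : ℂ)) + (-(t 0) * Complex.I) * (θ : ℂ)) * Q1 θ := by
      intro θ; ring
    rw [intervalIntegral.integral_congr (fun θ _ => hlin θ)]
    simp only [hQ1]
    rw [H3sum (t 0 * (Real.log R : ℂ)) (-(t 0) * Complex.I) (Finset.range (r + 1)) bb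
      (fun k => -(k : ℤ))]
    rw [hrange, Finset.sum_insert h0notin]
    rw [mul_add, Finset.mul_sum, Finset.mul_sum]
    congr 1
    · rw [if_pos (by norm_num)]
      simp only [hbb]
      norm_num
      ring
    · refine Finset.sum_congr rfl (fun k hk => ?_)
      obtain ⟨hk1, hk2⟩ := Finset.mem_Icc.1 hk
      rw [if_neg (by omega), neg_one_zpow_eq]
      have hkC : ((k : ℂ)) ≠ 0 := by
        simp only [ne_eq, Nat.cast_eq_zero]; omega
      have hζk : (ζ π) ^ (-(k : ℤ)) = (-1 : ℂ) ^ (k : ℤ) * (R : ℂ) ^ (-(k : ℤ)) := by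
        rw [hzpow π, E_pi, neg_one_zpow_eq]; ring
      rw [hζk]
      simp only [hbb]
      push_cast
      field_simp
  have e4 : (∫ θ in (-π)..π, (t 0 * ((Real.log R : ℂ) - Complex.I * θ)) * Q2 θ)
      = 2 * (π : ℂ) * -(t 0 * ∑' k : ℕ, s (k + 1) * (ζ π) ^ (k + 1)) := by
    have hlin : ∀ θ : ℝ, (t 0 * ((Real.log R : ℂ) - Complex.I * θ)) * Q2 θ
        = ((t 0 * (Real.log R : ℂ)) + (-(t 0) * Complex.I) * (θ : ℂ)) * Q2 θ := by
      intro θ; ring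
    rw [intervalIntegral.integral_congr (fun θ _ => hlin θ)]
    simp only [hQ2]
    rw [H4 (t 0 * (Real.log R : ℂ)) (-(t 0) * Complex.I) dd (fun k => ((k + 1 : ℕ) : ℤ))
      _ hdsum hddM]
    rw [show 2 * (π : ℂ) * -(t 0 * ∑' k : ℕ, s (k + 1) * (ζ π) ^ (k + 1))
        = ∑' k : ℕ, (2 * (π : ℂ) * -(t 0)) * (s (k + 1) * (ζ π) ^ (k + 1)) from by
      rw [tsum_mul_left]; ring]
    refine tsum_congr (fun k => ?_)
    rw [if_neg (by omega)]
    rw [hζpi, neg_pow, show ((-1 : ℂ)) ^ ((k + 1 : ℕ) : ℤ) = (-1 : ℂ) ^ (k + 1) from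
      zpow_natCast _ _]
    simp only [hdd]
    have hk1 : ((k : ℂ) + 1) ≠ 0 := Nat.cast_add_one_ne_zero k
    push_cast
    field_simp
  have e6 : (∫ θ in (-π)..π, P3 θ * Q2 θ)
      = 2 * (π : ℂ)
        * ∑' k : ℕ, ((k : ℂ) + 1) * ((‖s (k + 1)‖ ^ 2 : ℝ) : ℂ) * (R : ℂ) ^ (2 * (k + 1)) := by
    simp only [hP3, hQ2]
    rw [H5 cc (fun j => -((j + 1 : ℕ) : ℤ)) dd (fun k => ((k + 1 : ℕ) : ℤ)) _ _
      hsR hccM hdsum hddM]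
    rw [show 2 * (π : ℂ)
        * ∑' k : ℕ, ((k : ℂ) + 1) * ((‖s (k + 1)‖ ^ 2 : ℝ) : ℂ) * (R : ℂ) ^ (2 * (k + 1))
        = ∑' k : ℕ, 2 * (π : ℂ)
            * (((k : ℂ) + 1) * ((‖s (k + 1)‖ ^ 2 : ℝ) : ℂ) * (R : ℂ) ^ (2 * (k + 1))) from by
      rw [tsum_mul_left]]
    refine tsum_congr (fun k => ?_)
    rw [tsum_eq_single k (fun j hj => by rw [if_neg (by omega), mul_zero])]
    rw [if_pos (by omega)]
    simp only [hcc, hdd]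
    have hcs : (starRingEnd ℂ) (s (k + 1)) * s (k + 1) = ((‖s (k + 1)‖ : ℝ) : ℂ) ^ 2 := by
      rw [RCLike.conj_mul]; norm_cast
    have hRp : (R : ℂ) ^ (2 * (k + 1)) = (R : ℂ) ^ (k + 1) * (R : ℂ) ^ (k + 1) := by
      rw [two_mul, pow_add]
    rw [hRp]
    push_cast
    linear_combination (2 * (π : ℂ) * ((k : ℂ) + 1) * (R : ℂ) ^ (k + 1)
      * (R : ℂ) ^ (k + 1)) * hcs
  rw [e1, e2, e3, e4, e5, e6, hg π]
  field_simp
  ring
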